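/- Let ν > -1/2 and n ∈ ℕ₀. Then for every x > 0, -Δ_ν φ_n(x) - x² φ_n(x) + 2x φ_n'(x) + (2ν+2) φ_n(x) = 4 √(n+1) √(n+ν+1) · φ_{n+1}(x). -/

import Mathlib

open MeasureTheory Filter Set

/-- The Bessel differential operator `Δ_ν` acting on real-valued functions. -/
noncomputable def besselOp (ν : ℝ) (g : ℝ → ℝ) : ℝ → ℝ :=
  fun x => deriv (deriv g) x + ((2 * ν + 1) / x) * deriv g x

/-- The eigenfunctions
`φ_n(x) = ((-1)^n / √(2^{4n-1} n! Γ(n+ν+1))) e^{x²/2} (Δ_ν^n e^{-x²})(x)`. -/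
noncomputable def lagPhi (ν : ℝ) (n : ℕ) : ℝ → ℝ :=
  fun x =>
    ((-1 : ℝ) ^ n /
      Real.sqrt ((2 : ℝ) ^ (4 * (n : ℝ) - 1) * (n.factorial : ℝ) *
        Real.Gamma ((n : ℝ) + ν + 1))) *
      Real.exp (x ^ 2 / 2) * ((besselOp ν)^[n] (fun t => Real.exp (-t ^ 2)) x)

noncomputable def lagC (ν : ℝ) (n : ℕ) : ℝ :=
  (-1 : ℝ) ^ n /
    Real.sqrt ((2 : ℝ) ^ (4 * (n : ℝ) - 1) * (n.factorial : ℝ) *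
      Real.Gamma ((n : ℝ) + ν + 1))

noncomputable def Fb (ν : ℝ) (n : ℕ) : ℝ → ℝ :=
  (besselOp ν)^[n] (fun t => Real.exp (-t ^ 2))

lemma lagPhi_eq (ν : ℝ) (n : ℕ) :
    lagPhi ν n = fun x => lagC ν n * Real.exp (x ^ 2 / 2) * Fb ν n x := rfl

lemma Fb_smooth (ν : ℝ) (n : ℕ) : ContDiffOn ℝ ⊤ (Fb ν n) (Ioi (0 : ℝ)) := by
  induction n with
  | zero =>
      simp only [Fb, Function.iterate_zero, id]
      exact (Real.contDiff_exp.comp ((contDiff_id (E := ℝ)).pow 2).neg).contDiffOn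
  | succ n ih =>
      have h1 : ContDiffOn ℝ ⊤ (deriv (Fb ν n)) (Ioi (0 : ℝ)) :=
        ih.deriv_of_isOpen isOpen_Ioi le_top
      have h2 : ContDiffOn ℝ ⊤ (deriv (deriv (Fb ν n))) (Ioi (0 : ℝ)) :=
        h1.deriv_of_isOpen isOpen_Ioi le_top
      have : Fb ν (n + 1) = besselOp ν (Fb ν n) := by
        simp [Fb, Function.iterate_succ_apply']
      rw [this]
      exact h2.add ((ContDiffOn.div contDiffOn_const contDiffOn_id
        (fun x hx => ne_of_gt hx)).mul h1)

lemma Fb_hasDeriv (ν : ℝ) (n : ℕ) {x : ℝ} (hx : 0 < x) :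
    HasDerivAt (Fb ν n) (deriv (Fb ν n) x) x :=
  (((Fb_smooth ν n).contDiffAt (isOpen_Ioi.mem_nhds hx)).differentiableAt
    (by simp)).hasDerivAt

lemma Fb_deriv_hasDeriv (ν : ℝ) (n : ℕ) {x : ℝ} (hx : 0 < x) :
    HasDerivAt (deriv (Fb ν n)) (deriv (deriv (Fb ν n)) x) x :=
  ((((Fb_smooth ν n).deriv_of_isOpen isOpen_Ioi (m := ⊤) le_top).contDiffAt
    (isOpen_Ioi.mem_nhds hx)).differentiableAt (by simp)).hasDerivAt

lemma expsq_hasDeriv (y : ℝ) :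
    HasDerivAt (fun t : ℝ => Real.exp (t ^ 2 / 2)) (y * Real.exp (y ^ 2 / 2)) y := by
  have h := ((hasDerivAt_pow 2 y).div_const 2).exp
  convert h using 1
  simp [pow_one]
  ring

lemma lagPhi_hasDeriv (ν : ℝ) (n : ℕ) {x : ℝ} (hx : 0 < x) :
    HasDerivAt (lagPhi ν n)
      (lagC ν n * Real.exp (x ^ 2 / 2) * (x * Fb ν n x + deriv (Fb ν n) x)) x := by
  have h := ((expsq_hasDeriv x).const_mul (lagC ν n)).mul (Fb_hasDeriv ν n hx)
  rw [lagPhi_eq]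
  exact h.congr_deriv (by ring)

lemma lagPhi_deriv (ν : ℝ) (n : ℕ) {x : ℝ} (hx : 0 < x) :
    deriv (lagPhi ν n) x
      = lagC ν n * Real.exp (x ^ 2 / 2) * (x * Fb ν n x + deriv (Fb ν n) x) :=
  (lagPhi_hasDeriv ν n hx).deriv

lemma lagPhi_deriv2 (ν : ℝ) (n : ℕ) {x : ℝ} (hx : 0 < x) :
    deriv (deriv (lagPhi ν n)) x
      = lagC ν n * Real.exp (x ^ 2 / 2) *
          ((x ^ 2 + 1) * Fb ν n x + 2 * x * deriv (Fb ν n) x + deriv (deriv (Fb ν n)) x) := by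
  have hev : deriv (lagPhi ν n) =ᶠ[nhds x]
      (fun y => lagC ν n * Real.exp (y ^ 2 / 2) * (y * Fb ν n y + deriv (Fb ν n) y)) := by
    filter_upwards [isOpen_Ioi.mem_nhds hx] with y hy using lagPhi_deriv ν n hy
  rw [hev.deriv_eq]
  have h := ((expsq_hasDeriv x).const_mul (lagC ν n)).mul
    (((hasDerivAt_id' (x:=x)).mul (Fb_hasDeriv ν n hx)).add (Fb_deriv_hasDeriv ν n hx))
  rw [(show HasDerivAt (fun y => lagC ν n * Real.exp (y ^ 2 / 2) * (y * Fb ν n y + deriv (Fb ν n) y)) _ x from h).deriv]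
  simp only [Pi.add_apply, Pi.mul_apply]
  ring

lemma lagC_succ (ν : ℝ) (hν : ν > -(1/2)) (n : ℕ) :
    4 * Real.sqrt ((n : ℝ) + 1) * Real.sqrt ((n : ℝ) + ν + 1) * lagC ν (n + 1)
      = -lagC ν n := by
  have hpos1 : (0 : ℝ) < (n : ℝ) + 1 := by positivity
  have hpos2 : (0 : ℝ) < (n : ℝ) + ν + 1 := by
    have : (0 : ℝ) ≤ (n : ℝ) := Nat.cast_nonneg n
    linarith
  have hΓ : 0 < Real.Gamma ((n : ℝ) + ν + 1) := Real.Gamma_pos_of_pos hpos2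
  have hA : (0 : ℝ) < (2 : ℝ) ^ (4 * (n : ℝ) - 1) := Real.rpow_pos_of_pos two_pos _
  have hfac : (0 : ℝ) < (n.factorial : ℝ) := by positivity
  have h16 : (2 : ℝ) ^ (4 : ℝ) = 16 := by
    rw [show (4 : ℝ) = ((4 : ℕ) : ℝ) by norm_num, Real.rpow_natCast]; norm_num
  have key : Real.sqrt ((2 : ℝ) ^ (4 * ((n + 1 : ℕ) : ℝ) - 1) * ((n + 1).factorial : ℝ) *
        Real.Gamma (((n + 1 : ℕ) : ℝ) + ν + 1))
      = (4 * Real.sqrt ((n : ℝ) + 1) * Real.sqrt ((n : ℝ) + ν + 1)) *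
          Real.sqrt ((2 : ℝ) ^ (4 * (n : ℝ) - 1) * (n.factorial : ℝ) *
            Real.Gamma ((n : ℝ) + ν + 1)) := by
    push_cast [Nat.factorial_succ]
    rw [show (4 * ((n : ℝ) + 1) - 1) = (4 * (n : ℝ) - 1) + 4 by ring,
      Real.rpow_add two_pos, h16,
      show ((n : ℝ) + 1 + ν + 1) = ((n : ℝ) + ν + 1) + 1 by ring,
      Real.Gamma_add_one (ne_of_gt hpos2)]
    rw [show (2 : ℝ) ^ (4 * (n : ℝ) - 1) * 16 * (((n : ℝ) + 1) * (n.factorial : ℝ)) *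
          (((n : ℝ) + ν + 1) * Real.Gamma ((n : ℝ) + ν + 1))
        = 16 * (((n : ℝ) + 1) * (((n : ℝ) + ν + 1) *
            ((2 : ℝ) ^ (4 * (n : ℝ) - 1) * (n.factorial : ℝ) *
              Real.Gamma ((n : ℝ) + ν + 1)))) by ring]
    rw [Real.sqrt_mul (by norm_num : (0 : ℝ) ≤ 16), Real.sqrt_mul hpos1.le,
      Real.sqrt_mul hpos2.le,
      show Real.sqrt 16 = 4 by
        rw [show (16 : ℝ) = 4 ^ 2 by norm_num, Real.sqrt_sq (by norm_num : (0:ℝ) ≤ 4)]]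
    ring
  unfold lagC
  rw [key]
  have hS : (0 : ℝ) < Real.sqrt ((2 : ℝ) ^ (4 * (n : ℝ) - 1) * (n.factorial : ℝ) *
      Real.Gamma ((n : ℝ) + ν + 1)) := Real.sqrt_pos.2 (by positivity)
  have h1 : (0 : ℝ) < Real.sqrt ((n : ℝ) + 1) := Real.sqrt_pos.2 hpos1
  have h2 : (0 : ℝ) < Real.sqrt ((n : ℝ) + ν + 1) := Real.sqrt_pos.2 hpos2
  rw [pow_succ]
  field_simp

theorem stmt15 (ν : ℝ) (hν : ν > -(1/2)) (n : ℕ) :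
    ∀ x > (0 : ℝ),
      -(besselOp ν (lagPhi ν n) x) - x ^ 2 * lagPhi ν n x + 2 * x * deriv (lagPhi ν n) x +
          (2 * ν + 2) * lagPhi ν n x
        = 4 * Real.sqrt ((n : ℝ) + 1) * Real.sqrt ((n : ℝ) + ν + 1) * lagPhi ν (n + 1) x := by
  intro x hx
  have hx0 : x ≠ 0 := ne_of_gt hx
  have hb : besselOp ν (lagPhi ν n) x
      = deriv (deriv (lagPhi ν n)) x + ((2 * ν + 1) / x) * deriv (lagPhi ν n) x := rfl
  have hFb1 : Fb ν (n + 1) x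
      = deriv (deriv (Fb ν n)) x + ((2 * ν + 1) / x) * deriv (Fb ν n) x := by
    simp [Fb, Function.iterate_succ_apply', besselOp]
  have hphi : lagPhi ν n x = lagC ν n * Real.exp (x ^ 2 / 2) * Fb ν n x := rfl
  have hphi1 : lagPhi ν (n + 1) x = lagC ν (n + 1) * Real.exp (x ^ 2 / 2) * Fb ν (n + 1) x := rfl
  rw [hb, lagPhi_deriv ν n hx, lagPhi_deriv2 ν n hx, hphi, hphi1, hFb1]
  have hC := lagC_succ ν hν n
  linear_combination (-(Real.exp (x ^ 2 / 2)) *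
    (deriv (deriv (Fb ν n)) x + ((2 * ν + 1) / x) * deriv (Fb ν n) x)) * hC -
    ((2 * ν + 1) * lagC ν n * Real.exp (x ^ 2 / 2) * Fb ν n x) * (mul_inv_cancel₀ hx0)
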